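/- Let z₀, z₁, z₂, z₃ ∈ ℂ be nonzero with z₁ + z₂ ≠ 0. Define z₁' := conj(z₂)·(z₁+z₂)/(conj(z₁)+conj(z₂)) and z₂' := conj(z₁)·(z₁+z₂)/(conj(z₁)+conj(z₂)). Set y₀ := z₁/z₀, y₁ := z₂/z₁, y₂ := z₃/z₂ and y₀' := z₁'/z₀, y₁' := z₂'/z₁', y₂' := z₃/z₂'. Then y₀' = y₀·(1+y₁)/(1+conj(y₁)⁻¹), y₁' = conj(y₁)⁻¹, and y₂' = y₂·(1+conj(y₁))/(1+y₁⁻¹). -/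

import Mathlib

open Complex

/-- Recutting written in terms of the ratios `yᵢ` of consecutive edge vectors:
if `(z₁, z₂)` is replaced by `(z₁', z₂')` according to the recutting rule, then the
ratios transform by `y₀' = y₀ (1 + y₁)/(1 + conj y₁ ⁻¹)`, `y₁' = conj y₁ ⁻¹`,
`y₂' = y₂ (1 + conj y₁)/(1 + y₁⁻¹)`. -/
theorem recutting_y_coords (z₀ z₁ z₂ z₃ : ℂ)
    (h₀ : z₀ ≠ 0) (h₁ : z₁ ≠ 0) (h₂ : z₂ ≠ 0) (h₃ : z₃ ≠ 0)
    (hsum : z₁ + z₂ ≠ 0)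
    (z₁' z₂' : ℂ)
    (hz₁' : z₁' = (starRingEnd ℂ) z₂ * (z₁ + z₂) / ((starRingEnd ℂ) z₁ + (starRingEnd ℂ) z₂))
    (hz₂' : z₂' = (starRingEnd ℂ) z₁ * (z₁ + z₂) / ((starRingEnd ℂ) z₁ + (starRingEnd ℂ) z₂))
    (y₀ y₁ y₂ y₀' y₁' y₂' : ℂ)
    (hy₀ : y₀ = z₁ / z₀) (hy₁ : y₁ = z₂ / z₁) (hy₂ : y₂ = z₃ / z₂)
    (hy₀' : y₀' = z₁' / z₀) (hy₁' : y₁' = z₂' / z₁') (hy₂' : y₂' = z₃ / z₂') :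
    y₀' = y₀ * (1 + y₁) / (1 + ((starRingEnd ℂ) y₁)⁻¹) ∧
    y₁' = ((starRingEnd ℂ) y₁)⁻¹ ∧
    y₂' = y₂ * (1 + (starRingEnd ℂ) y₁) / (1 + y₁⁻¹) := by
  have hc1 : (starRingEnd ℂ) z₁ ≠ 0 := by simpa using h₁
  have hc2 : (starRingEnd ℂ) z₂ ≠ 0 := by simpa using h₂
  have hcsum : (starRingEnd ℂ) z₁ + (starRingEnd ℂ) z₂ ≠ 0 := by
    rw [← map_add]
    exact fun h => hsum (by simpa using congrArg (starRingEnd ℂ) h)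
  have hz₁n : z₁' ≠ 0 := by
    rw [hz₁']; exact div_ne_zero (mul_ne_zero hc2 hsum) hcsum
  have hz₂n : z₂' ≠ 0 := by
    rw [hz₂']; exact div_ne_zero (mul_ne_zero hc1 hsum) hcsum
  have hA : (starRingEnd ℂ) z₂ * z₁ * z₀ + z₁ * (starRingEnd ℂ) z₁ * z₀ ≠ 0 := by
    have : (starRingEnd ℂ) z₂ * z₁ * z₀ + z₁ * (starRingEnd ℂ) z₁ * z₀
        = z₀ * z₁ * ((starRingEnd ℂ) z₁ + (starRingEnd ℂ) z₂) := by ring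
    rw [this]; exact mul_ne_zero (mul_ne_zero h₀ h₁) hcsum
  have hB : (starRingEnd ℂ) z₁ * z₂ * z₁ + (starRingEnd ℂ) z₁ * z₂ ^ 2 ≠ 0 := by
    have : (starRingEnd ℂ) z₁ * z₂ * z₁ + (starRingEnd ℂ) z₁ * z₂ ^ 2
        = (starRingEnd ℂ) z₁ * z₂ * (z₁ + z₂) := by ring
    rw [this]; exact mul_ne_zero (mul_ne_zero hc1 h₂) hsum
  subst hz₁' hz₂' hy₀ hy₁ hy₂ hy₀' hy₁' hy₂'
  refine ⟨?_, ?_, ?_⟩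
  · simp only [map_div₀]
    field_simp [hA]
    rw [eq_div_iff (show (starRingEnd ℂ) z₂ + (starRingEnd ℂ) z₁ ≠ 0 by rw [add_comm]; exact hcsum)]
    ring
  · simp only [map_div₀]
    field_simp
  · simp only [map_div₀]
    field_simp [hB]
    rw [eq_div_iff (show z₂ + z₁ ≠ 0 by rw [add_comm]; exact hsum)]
    ring
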